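/- For every positive integer p, all natural numbers n and k with 0 ≤ k ≤ n, and every real number x, the Nörlund polynomials satisfy Σ_{j=0}^{n-k} C(n-k, j) B_{j+k}^{(p)}(x) = Σ_{j=0}^{k} C(k, j) (-1)^j { B_{n-j}^{(p)}(x) + (n-j) B_{n-j-1}^{(p-1)}(x) }. -/

import Mathlib

open Finset PowerSeries

private lemma kim_comb_aux : ∀ k n j : ℕ, k ≤ n →
    ∑ i ∈ range (k+1), (-1:ℝ)^i * (k.choose i) * ((n-i).choose j) =
      if k ≤ j then ((n-k).choose (j-k) : ℝ) else 0 := by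
  intro k
  induction k with
  | zero => intro n j _; simp
  | succ k ih =>
    intro n j hkn
    have hk : k ≤ n - 1 := by omega
    rw [Finset.sum_range_succ' (fun i => (-1:ℝ)^i * ((k+1).choose i) * ((n-i).choose j))]
    have split : (∑ i ∈ range (k+1), (-1:ℝ)^(i+1) * ((k+1).choose (i+1)) * ((n-(i+1)).choose j))
        = (∑ i ∈ range (k+1), (-1:ℝ)^(i+1) * (k.choose (i+1)) * ((n-(i+1)).choose j))
          + (∑ i ∈ range (k+1), (-1:ℝ)^(i+1) * (k.choose i) * ((n-1-i).choose j)) := by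
      rw [← Finset.sum_add_distrib]
      refine Finset.sum_congr rfl fun i hi => ?_
      have hni : n - (i+1) = n - 1 - i := by omega
      rw [Nat.choose_succ_succ, hni]
      push_cast
      ring
    rw [split]
    have e1 : (∑ i ∈ range (k+1), (-1:ℝ)^(i+1) * (k.choose (i+1)) * ((n-(i+1)).choose j))
        + (-1:ℝ)^0 * ((k+1).choose 0) * ((n-0).choose j)
        = ∑ i ∈ range (k+1), (-1:ℝ)^i * (k.choose i) * ((n-i).choose j) := by
      rw [Finset.sum_range_succ' (fun i => (-1:ℝ)^i * (k.choose i) * ((n-i).choose j)),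
        Finset.sum_range_succ (fun i => (-1:ℝ)^(i+1) * (k.choose (i+1)) * ((n-(i+1)).choose j))]
      simp [Nat.choose_succ_self]
    have e2 : (∑ i ∈ range (k+1), (-1:ℝ)^(i+1) * (k.choose i) * ((n-1-i).choose j))
        = -(∑ i ∈ range (k+1), (-1:ℝ)^i * (k.choose i) * (((n-1)-i).choose j)) := by
      rw [← Finset.sum_neg_distrib]
      refine Finset.sum_congr rfl fun i hi => ?_
      ring
    calc (∑ i ∈ range (k+1), (-1:ℝ)^(i+1) * (k.choose (i+1)) * ((n-(i+1)).choose j))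
          + (∑ i ∈ range (k+1), (-1:ℝ)^(i+1) * (k.choose i) * ((n-1-i).choose j))
          + (-1:ℝ)^0 * ((k+1).choose 0) * ((n-0).choose j)
        = (∑ i ∈ range (k+1), (-1:ℝ)^i * (k.choose i) * ((n-i).choose j))
          - (∑ i ∈ range (k+1), (-1:ℝ)^i * (k.choose i) * (((n-1)-i).choose j)) := by
          rw [← e1, e2]; ring
      _ = (if k ≤ j then ((n-k).choose (j-k) : ℝ) else 0)
          - (if k ≤ j then ((n-1-k).choose (j-k) : ℝ) else 0) := by
          rw [ih n j (by omega), ih (n-1) j hk]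
      _ = if k+1 ≤ j then ((n-(k+1)).choose (j-(k+1)) : ℝ) else 0 := by
          by_cases h1 : k + 1 ≤ j
          · rw [if_pos (by omega), if_pos (by omega), if_pos h1]
            have h2 : n - k = (n - (k+1)) + 1 := by omega
            have h3 : j - k = (j - (k+1)) + 1 := by omega
            have h4 : n - 1 - k = n - (k+1) := by omega
            rw [h2, h3, h4, Nat.choose_succ_succ]
            push_cast
            ring
          · by_cases h0 : k ≤ j
            · have hj : j = k := by omega
              rw [if_pos h0, if_pos h0, if_neg h1, hj]
              simp
            · rw [if_neg h0, if_neg h0, if_neg h1]; ring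

private lemma kim_key (p : ℕ) (hp : 0 < p) (x : ℝ) (B : ℕ → ℝ → ℕ → ℝ)
    (hB : ∀ (q : ℕ) (y : ℝ), (PowerSeries.mk fun m => B q y m / (m.factorial : ℝ)) *
        (PowerSeries.exp ℝ - 1) ^ q =
      PowerSeries.X ^ q * PowerSeries.rescale y (PowerSeries.exp ℝ)) :
    ∀ m : ℕ, ∑ i ∈ range (m+1), (m.choose i : ℝ) * B p x i
      = B p x m + (m:ℝ) * B (p-1) x (m-1) := by
  set F : ℕ → ℝ⟦X⟧ := fun q => PowerSeries.mk fun m => B q x m / (m.factorial : ℝ) with hF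
  have hne : ∀ r : ℕ, (PowerSeries.exp ℝ - 1) ^ r ≠ 0 := by
    intro r
    apply pow_ne_zero
    intro h
    have : (PowerSeries.coeff 1) (PowerSeries.exp ℝ - 1) = 0 := by rw [h]; simp
    simp [PowerSeries.coeff_exp] at this
  have hrec : F p * PowerSeries.exp ℝ = F p + PowerSeries.X * F (p-1) := by
    obtain ⟨q, rfl⟩ : ∃ q, p = q + 1 := ⟨p-1, by omega⟩
    simp only [Nat.add_sub_cancel]
    have h1 := hB (q+1) x
    have h2 := hB q x
    have key : (F (q+1) * (PowerSeries.exp ℝ - 1)) * (PowerSeries.exp ℝ - 1)^q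
        = (PowerSeries.X * F q) * (PowerSeries.exp ℝ - 1)^q := by
      calc (F (q+1) * (PowerSeries.exp ℝ - 1)) * (PowerSeries.exp ℝ - 1)^q
          = F (q+1) * (PowerSeries.exp ℝ - 1)^(q+1) := by ring
        _ = PowerSeries.X ^ (q+1) * PowerSeries.rescale x (PowerSeries.exp ℝ) := h1
        _ = PowerSeries.X * (PowerSeries.X ^ q * PowerSeries.rescale x (PowerSeries.exp ℝ)) := by
            ring
        _ = (PowerSeries.X * F q) * (PowerSeries.exp ℝ - 1)^q := by rw [← h2]; ring
    have := mul_right_cancel₀ (hne q) key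
    linear_combination this
  intro m
  have hc : PowerSeries.coeff m (F p * PowerSeries.exp ℝ)
      = PowerSeries.coeff m (F p) + PowerSeries.coeff m (PowerSeries.X * F (p-1)) := by
    rw [hrec, map_add]
  have hL : (m.factorial : ℝ) * PowerSeries.coeff m (F p * PowerSeries.exp ℝ)
      = ∑ i ∈ range (m+1), (m.choose i : ℝ) * B p x i := by
    rw [PowerSeries.coeff_mul, Finset.Nat.sum_antidiagonal_eq_sum_range_succ_mk, Finset.mul_sum]
    refine Finset.sum_congr rfl fun i hi => ?_
    have him : i ≤ m := by simp at hi; omega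
    simp only [hF, PowerSeries.coeff_mk, PowerSeries.coeff_exp]
    have hfac : (m.choose i : ℝ) * (i.factorial : ℝ) * ((m-i).factorial : ℝ) = m.factorial := by
      exact_mod_cast congrArg (Nat.cast : ℕ → ℝ) (Nat.choose_mul_factorial_mul_factorial him)
    have h1 : (i.factorial : ℝ) ≠ 0 := by positivity
    have h2 : ((m-i).factorial : ℝ) ≠ 0 := by positivity
    rw [eq_comm]
    have : ((algebraMap ℚ ℝ) (1 / ((m-i).factorial : ℚ))) = 1 / ((m-i).factorial : ℝ) := by
      push_cast
      simp
    rw [this]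
    field_simp
    rw [← hfac]
    ring
  have hR : (m.factorial : ℝ) * (PowerSeries.coeff m (F p) + PowerSeries.coeff m (PowerSeries.X * F (p-1)))
      = B p x m + (m:ℝ) * B (p-1) x (m-1) := by
    rcases Nat.eq_zero_or_pos m with hm | hm
    · subst hm
      simp [hF]
    · obtain ⟨m', rfl⟩ : ∃ m', m = m' + 1 := ⟨m-1, by omega⟩
      rw [PowerSeries.coeff_succ_X_mul]
      simp only [hF, PowerSeries.coeff_mk, Nat.add_sub_cancel]
      have h1 : ((m'+1).factorial : ℝ) ≠ 0 := by positivity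
      have h2 : ((m').factorial : ℝ) ≠ 0 := by positivity
      have hfac : ((m'+1).factorial : ℝ) = (m'+1) * (m'.factorial : ℝ) := by
        push_cast [Nat.factorial_succ]; ring
      field_simp
      rw [hfac]
      push_cast
      ring
  rw [← hL, ← hR, hc]

/-- Kim's identity for the Nörlund polynomials `B_n^{(p)}(x)` (generating function
`e^{x t} (t/(e^t-1))^p = Σ B_n^{(p)}(x) tⁿ/n!`, with `B_n^{(0)}(x) = xⁿ`):
`Σ_{j=0}^{n-k} C(n-k,j) B_{j+k}^{(p)}(x)
  = Σ_{j=0}^{k} C(k,j) (-1)^j {B_{n-j}^{(p)}(x) + (n-j) B_{n-j-1}^{(p-1)}(x)}`. -/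
theorem statement_15 (p : ℕ) (hp : 0 < p) (n k : ℕ) (hkn : k ≤ n) (x : ℝ)
    (B : ℕ → ℝ → ℕ → ℝ)
    (hB : ∀ (q : ℕ) (y : ℝ), (PowerSeries.mk fun m => B q y m / (m.factorial : ℝ)) *
        (PowerSeries.exp ℝ - 1) ^ q =
      PowerSeries.X ^ q * PowerSeries.rescale y (PowerSeries.exp ℝ)) :
    ∑ j ∈ Finset.range (n - k + 1), ((n - k).choose j : ℝ) * B p x (j + k) =
      ∑ j ∈ Finset.range (k + 1), (k.choose j : ℝ) * (-1) ^ j *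
        (B p x (n - j) + ((n : ℝ) - (j : ℝ)) * B (p - 1) x (n - j - 1)) := by
  have key := kim_key p hp x B hB
  -- Rewrite each RHS term using the key identity
  have step1 : ∀ j ∈ Finset.range (k+1),
      (k.choose j : ℝ) * (-1) ^ j *
        (B p x (n - j) + ((n : ℝ) - (j : ℝ)) * B (p - 1) x (n - j - 1))
      = (k.choose j : ℝ) * (-1) ^ j *
          ∑ i ∈ range (n - j + 1), ((n-j).choose i : ℝ) * B p x i := by
    intro j hj
    have hjk : j ≤ k := by simp at hj; omega
    have hjn : j ≤ n := le_trans hjk hkn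
    have hcast : ((n : ℝ) - (j : ℝ)) = ((n - j : ℕ) : ℝ) := by
      rw [Nat.cast_sub hjn]
    rw [hcast, ← key (n - j)]
  rw [Finset.sum_congr rfl step1]
  -- Extend inner sums to range (n+1)
  have step2 : ∀ j ∈ Finset.range (k+1),
      (k.choose j : ℝ) * (-1) ^ j *
          ∑ i ∈ range (n - j + 1), ((n-j).choose i : ℝ) * B p x i
      = ∑ i ∈ range (n + 1),
          (k.choose j : ℝ) * (-1) ^ j * (((n-j).choose i : ℝ) * B p x i) := by
    intro j hj
    rw [Finset.mul_sum]
    apply Finset.sum_subset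
    · intro a ha
      simp only [Finset.mem_range] at *
      omega
    · intro i hi hni
      simp only [Finset.mem_range] at hi hni
      have : n - j < i := by omega
      rw [Nat.choose_eq_zero_of_lt this]
      simp
  rw [Finset.sum_congr rfl step2, Finset.sum_comm]
  have step3 : ∀ i ∈ Finset.range (n+1),
      (∑ j ∈ range (k+1),
        (k.choose j : ℝ) * (-1) ^ j * (((n-j).choose i : ℝ) * B p x i))
      = (if k ≤ i then ((n-k).choose (i-k) : ℝ) else 0) * B p x i := by
    intro i hi
    rw [← kim_comb_aux k n i hkn, Finset.sum_mul]
    refine Finset.sum_congr rfl fun j hj => ?_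
    ring
  rw [Finset.sum_congr rfl step3]
  have rhs_eq : ∑ i ∈ Finset.range (n+1),
      (if k ≤ i then ((n-k).choose (i-k) : ℝ) else 0) * B p x i
      = ∑ i ∈ Finset.range (n-k+1), ((n-k).choose i : ℝ) * B p x (i+k) := by
    conv_lhs => rw [Finset.range_eq_Ico]
    rw [← Finset.sum_Ico_consecutive _ (Nat.zero_le k) (by omega : k ≤ n + 1)]
    have z1 : ∑ i ∈ Finset.Ico 0 k,
        (if k ≤ i then ((n-k).choose (i-k) : ℝ) else 0) * B p x i = 0 := by
      apply Finset.sum_eq_zero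
      intro i hi
      simp only [Finset.mem_Ico] at hi
      rw [if_neg (by omega)]
      ring
    rw [z1, zero_add, Finset.sum_Ico_eq_sum_range]
    have hnk : n + 1 - k = n - k + 1 := by omega
    rw [hnk]
    refine Finset.sum_congr rfl fun i hi => ?_
    rw [if_pos (by omega : k ≤ k + i)]
    have e1 : k + i - k = i := by omega
    have e2 : k + i = i + k := by omega
    rw [e1, e2]
  rw [rhs_eq]
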